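/- Let L be a complex Hilbert space and let C, S ∈ B(L) be commuting, positive, injective selfadjoint operators with C² + S² = 1. On H = L ⊕ L let P₀ = [[1, 0], [0, 0]] and Q₀ = [[C², CS], [CS, S²]] (which are orthogonal projections). Then a unitary W ∈ B(H) commutes with both P₀ and Q₀ if and only if W = [[W', 0], [0, W']] for some unitary W' ∈ B(L) commuting with C and S. -/

import Mathlib

open ContinuousLinearMap

variable {L : Type*} [NormedAddCommGroup L] [InnerProductSpace ℂ L] [CompleteSpace L]

/-- The block operator `[[X, Y], [Z, W]]` on the Hilbert-space direct sum `L ⊕ L`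
(realized as `WithLp 2 (L × L)`), acting by `(ξ, η) ↦ (Xξ + Yη, Zξ + Wη)`. -/
noncomputable def blockOp (X Y Z W : L →L[ℂ] L) :
    WithLp 2 (L × L) →L[ℂ] WithLp 2 (L × L) :=
  (WithLp.prodContinuousLinearEquiv 2 ℂ L L).symm.toContinuousLinearMap ∘L
    (((X.coprod Y).prod (Z.coprod W)) ∘L
      (WithLp.prodContinuousLinearEquiv 2 ℂ L L).toContinuousLinearMap)


set_option linter.unusedSectionVars false
set_option linter.unusedVariables false

lemma blockOp_apply_fst (X Y Z W : L →L[ℂ] L) (v : WithLp 2 (L × L)) :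
    (blockOp X Y Z W v).fst = X v.fst + Y v.snd := rfl

lemma blockOp_apply_snd (X Y Z W : L →L[ℂ] L) (v : WithLp 2 (L × L)) :
    (blockOp X Y Z W v).snd = Z v.fst + W v.snd := rfl

lemma withlp_ext {v w : WithLp 2 (L × L)} (h1 : v.fst = w.fst) (h2 : v.snd = w.snd) : v = w :=
  congrArg (WithLp.toLp 2) (Prod.ext h1 h2)

noncomputable def pairL (ξ η : L) : WithLp 2 (L × L) := (WithLp.equiv 2 (L × L)).symm (ξ, η)

@[simp] lemma pairL_fst (ξ η : L) : (pairL (L := L) ξ η).fst = ξ := rfl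
@[simp] lemma pairL_snd (ξ η : L) : (pairL (L := L) ξ η).snd = η := rfl

lemma blockOp_inj {X Y Z W X' Y' Z' W' : L →L[ℂ] L}
    (h : blockOp X Y Z W = blockOp X' Y' Z' W') :
    X = X' ∧ Y = Y' ∧ Z = Z' ∧ W = W' := by
  refine ⟨?_, ?_, ?_, ?_⟩ <;> ext ξ
  · have := congrArg WithLp.fst (congrFun (congrArg DFunLike.coe h) (pairL ξ 0))
    simpa [blockOp_apply_fst] using this
  · have := congrArg WithLp.fst (congrFun (congrArg DFunLike.coe h) (pairL 0 ξ))
    simpa [blockOp_apply_fst] using this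
  · have := congrArg WithLp.snd (congrFun (congrArg DFunLike.coe h) (pairL ξ 0))
    simpa [blockOp_apply_snd] using this
  · have := congrArg WithLp.snd (congrFun (congrArg DFunLike.coe h) (pairL 0 ξ))
    simpa [blockOp_apply_snd] using this

lemma blockOp_mul (X Y Z W X' Y' Z' W' : L →L[ℂ] L) :
    blockOp X Y Z W * blockOp X' Y' Z' W' =
      blockOp (X * X' + Y * Z') (X * Y' + Y * W') (Z * X' + W * Z') (Z * Y' + W * W') := by
  ext v
  refine withlp_ext ?_ ?_ <;>
    simp [ContinuousLinearMap.mul_apply, blockOp_apply_fst, blockOp_apply_snd,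
      ContinuousLinearMap.add_apply, map_add] <;> abel

lemma blockOp_one : (blockOp 1 0 0 1 : WithLp 2 (L × L) →L[ℂ] WithLp 2 (L × L)) = 1 := by
  ext v
  exact withlp_ext (by simp [blockOp_apply_fst]) (by simp [blockOp_apply_snd])

lemma blockOp_adjoint (X Y Z W : L →L[ℂ] L) :
    adjoint (blockOp X Y Z W) = blockOp (adjoint X) (adjoint Z) (adjoint Y) (adjoint W) := by
  symm
  rw [eq_adjoint_iff]
  intro x y
  simp [WithLp.prod_inner_apply, blockOp_apply_fst, blockOp_apply_snd, inner_add_left,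
    inner_add_right, adjoint_inner_left]
  ring

lemma exists_blockOp (T : WithLp 2 (L × L) →L[ℂ] WithLp 2 (L × L)) :
    ∃ A B D E : L →L[ℂ] L, T = blockOp A B D E := by
  refine ⟨fst ℂ L L ∘L (WithLp.prodContinuousLinearEquiv 2 ℂ L L).toContinuousLinearMap ∘L T ∘L
      (WithLp.prodContinuousLinearEquiv 2 ℂ L L).symm.toContinuousLinearMap ∘L inl ℂ L L,
    fst ℂ L L ∘L (WithLp.prodContinuousLinearEquiv 2 ℂ L L).toContinuousLinearMap ∘L T ∘L
      (WithLp.prodContinuousLinearEquiv 2 ℂ L L).symm.toContinuousLinearMap ∘L inr ℂ L L,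
    snd ℂ L L ∘L (WithLp.prodContinuousLinearEquiv 2 ℂ L L).toContinuousLinearMap ∘L T ∘L
      (WithLp.prodContinuousLinearEquiv 2 ℂ L L).symm.toContinuousLinearMap ∘L inl ℂ L L,
    snd ℂ L L ∘L (WithLp.prodContinuousLinearEquiv 2 ℂ L L).toContinuousLinearMap ∘L T ∘L
      (WithLp.prodContinuousLinearEquiv 2 ℂ L L).symm.toContinuousLinearMap ∘L inr ℂ L L, ?_⟩
  ext v
  have hv : v = pairL v.fst 0 + pairL 0 v.snd := withlp_ext (by simp) (by simp)
  refine withlp_ext ?_ ?_ <;>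
  · conv_lhs => rw [hv]
    simp only [map_add]
    rfl

lemma commute_of_commute_mul_self {U C : L →L[ℂ] L} (hU : U ∈ unitary (L →L[ℂ] L))
    (hC : C.IsPositive) (h : Commute U (C * C)) : Commute U C := by
  have hC0 : 0 ≤ C := C.nonneg_iff_isPositive.mpr hC
  have hD0 : 0 ≤ U * C * star U := star_right_conjugate_nonneg hC0 U
  have h1 : star U * U = 1 := hU.1
  have h2 : U * star U = 1 := hU.2
  have hsq : (U * C * star U) * (U * C * star U) = C * C := by
    have e : U * C * star U * (U * C * star U) = U * C * (star U * U) * C * star U := by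
      noncomm_ring
    rw [e, h1, mul_one, mul_assoc U C C, h.eq, mul_assoc (C * C) U (star U), h2, mul_one]
  have key : U * C * star U = C := by
    have e1 := CFC.sqrt_unique hsq hD0
    rw [CFC.sqrt_mul_self C hC0] at e1; exact e1.symm
  have : U * C * (star U * U) = C * U := by rw [← mul_assoc, key]
  rwa [h1, mul_one] at this


/-- the isotropy group: a unitary `W` on `L ⊕ L` commutes with both
`P₀ = [[1,0],[0,0]]` and `Q₀ = [[C², CS],[CS, S²]]` iff `W = [[W', 0],[0, W']]` for a
unitary `W'` of `L` commuting with `C` and `S`. -/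
theorem isotropy_unitaries (C S : L →L[ℂ] L)
    (hC : C.IsPositive) (hS : S.IsPositive)
    (hCinj : Function.Injective ⇑C) (hSinj : Function.Injective ⇑S)
    (hCS : Commute C S) (hone : C * C + S * S = 1)
    (W : WithLp 2 (L × L) →L[ℂ] WithLp 2 (L × L))
    (hW : W ∈ unitary (WithLp 2 (L × L) →L[ℂ] WithLp 2 (L × L))) :
    (Commute W (blockOp 1 0 0 0) ∧
        Commute W (blockOp (C * C) (C * S) (C * S) (S * S))) ↔
      ∃ W' : L →L[ℂ] L, W' ∈ unitary (L →L[ℂ] L) ∧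
        Commute W' C ∧ Commute W' S ∧ W = blockOp W' 0 0 W' := by
  constructor
  · rintro ⟨hP, hQ⟩
    obtain ⟨A, B, D, E, rfl⟩ := exists_blockOp W
    -- P₀ commutation kills off-diagonal blocks
    have hp := hP.eq
    rw [blockOp_mul, blockOp_mul] at hp
    obtain ⟨p1, p2, p3, p4⟩ := blockOp_inj hp
    have hB : B = 0 := by simpa using p2.symm
    have hD : D = 0 := by simpa using p3
    subst hB hD
    -- unitarity of A and E
    have hst : star (blockOp A 0 0 E) = blockOp (star A) 0 0 (star E) := by
      have h0 : adjoint (0 : L →L[ℂ] L) = 0 := by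
        rw [← ContinuousLinearMap.star_eq_adjoint, star_zero]
      simp [ContinuousLinearMap.star_eq_adjoint, blockOp_adjoint, h0]
    have hu1 := hW.1
    rw [hst, blockOp_mul, ← blockOp_one] at hu1
    obtain ⟨u1, _, _, u4⟩ := blockOp_inj hu1
    have hu2 := hW.2
    rw [hst, blockOp_mul, ← blockOp_one] at hu2
    obtain ⟨u1', _, _, u4'⟩ := blockOp_inj hu2
    have hAu : A ∈ unitary (L →L[ℂ] L) := ⟨by simpa using u1, by simpa using u1'⟩
    have hEu : E ∈ unitary (L →L[ℂ] L) := ⟨by simpa using u4, by simpa using u4'⟩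
    -- Q₀ commutation
    have hq := hQ.eq
    rw [blockOp_mul, blockOp_mul] at hq
    obtain ⟨q1, q2, q3, q4⟩ := blockOp_inj hq
    have hACC : Commute A (C * C) := (by simpa using q1 : A * (C * C) = C * C * A)
    have hESS : Commute E (S * S) := (by simpa using q4 : E * (S * S) = S * S * E)
    have hACS : A * (C * S) = (C * S) * E := by simpa using q2
    have hASS : Commute A (S * S) := by
      have h1 : A * (C * C + S * S) = (C * C + S * S) * A := by rw [hone]; simp
      have := h1
      rw [mul_add, add_mul, hACC.eq] at this
      exact add_left_cancel this
    have hAC : Commute A C := commute_of_commute_mul_self hAu hC hACC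
    have hAS : Commute A S := commute_of_commute_mul_self hAu hS hASS
    -- A = E
    have hAE : A = E := by
      have h2 : (C * S) * A = (C * S) * E := by
        calc C * S * A = C * (S * A) := mul_assoc _ _ _
          _ = C * (A * S) := by rw [← hAS.eq]
          _ = C * A * S := (mul_assoc _ _ _).symm
          _ = A * C * S := by rw [← hAC.eq]
          _ = A * (C * S) := mul_assoc _ _ _
          _ = C * S * E := hACS
      ext ξ
      have := congrFun (congrArg DFunLike.coe h2) ξ
      simp only [ContinuousLinearMap.mul_apply] at this
      exact hSinj (hCinj this)
    exact ⟨A, hAu, hAC, hAS, by rw [hAE]⟩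
  · rintro ⟨W', hW', hC', hS', rfl⟩
    constructor
    · show _ * _ = _ * _
      rw [blockOp_mul, blockOp_mul]
      simp
    · show _ * _ = _ * _
      rw [blockOp_mul, blockOp_mul]
      simp only [mul_zero, zero_mul, add_zero, zero_add]
      rw [(hC'.mul_right hC').eq, (hC'.mul_right hS').eq, (hS'.mul_right hS').eq]
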